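/- Let n ≥ 3 be an odd integer. Every n×n real symmetric matrix A with a_{ij} > 0 whenever i - j ≡ ±1 (mod n) and a_{ij} = 0 otherwise has the same signature as the adjacency matrix of the n-cycle: ((n+1)/2, (n-1)/2) if n ≡ 1 (mod 4), and ((n-1)/2, (n+1)/2) if n ≡ 3 (mod 4). -/

import Mathlib

open Finset Matrix

/-- One-sided Sylvester inequality: if the quadratic form `∑ e i * x i ^ 2` can be written
as `∑ d k * (L x k) ^ 2` for a linear map `L`, then the number of positive `e i` is at most
the number of positive `d k`. -/
theorem sylvester_card_le {m : Type*} [Fintype m] (e d : m → ℝ)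
    (L : (m → ℝ) →ₗ[ℝ] (m → ℝ))
    (h : ∀ x : m → ℝ, ∑ i, e i * x i ^ 2 = ∑ k, d k * (L x k) ^ 2) :
    Fintype.card {i // 0 < e i} ≤ Fintype.card {k // 0 < d k} := by
  classical
  by_contra hlt
  push_neg at hlt
  set Φ : (m → ℝ) →ₗ[ℝ] ({i // ¬ 0 < e i} → ℝ) × ({k // 0 < d k} → ℝ) :=
    (LinearMap.funLeft ℝ ℝ (Subtype.val : {i // ¬ 0 < e i} → m)).prod
      ((LinearMap.funLeft ℝ ℝ (Subtype.val : {k // 0 < d k} → m)).comp L) with hΦ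
  have hninj : ¬ Function.Injective Φ := by
    intro hinj
    have hle := LinearMap.finrank_le_finrank_of_injective hinj
    have h1 : Module.finrank ℝ (m → ℝ) = Fintype.card m := Module.finrank_pi ℝ
    have h2 : Module.finrank ℝ (({i // ¬ 0 < e i} → ℝ) × ({k // 0 < d k} → ℝ)) =
        Fintype.card {i // ¬ 0 < e i} + Fintype.card {k // 0 < d k} := by
      rw [Module.finrank_prod, Module.finrank_pi, Module.finrank_pi]
    have h3 : Fintype.card {i // ¬ 0 < e i} = Fintype.card m - Fintype.card {i // 0 < e i} :=
      Fintype.card_subtype_compl _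
    have h4 : Fintype.card {i // 0 < e i} ≤ Fintype.card m := Fintype.card_subtype_le _
    omega
  rw [← LinearMap.ker_eq_bot] at hninj
  obtain ⟨x, hxker, hx0⟩ := (Submodule.ne_bot_iff _).mp hninj
  have hx1 : ∀ i : m, ¬ 0 < e i → x i = 0 := by
    intro i hi
    have := congrFun (congrArg Prod.fst hxker) ⟨i, hi⟩
    simpa [hΦ] using this
  have hx2 : ∀ k : m, 0 < d k → L x k = 0 := by
    intro k hk
    have := congrFun (congrArg Prod.snd hxker) ⟨k, hk⟩
    simpa [hΦ] using this
  obtain ⟨i₀, hi₀⟩ : ∃ i, x i ≠ 0 := by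
    by_contra hc; push_neg at hc; exact hx0 (funext hc)
  have hei₀ : 0 < e i₀ := by
    by_contra hc; exact hi₀ (hx1 i₀ hc)
  have hpos : 0 < ∑ i, e i * x i ^ 2 := by
    refine Finset.sum_pos' ?_ ⟨i₀, Finset.mem_univ _, ?_⟩
    · intro i _
      by_cases hi : 0 < e i
      · exact mul_nonneg hi.le (sq_nonneg _)
      · simp [hx1 i hi]
    · exact mul_pos hei₀ ((sq_nonneg _).lt_of_ne' (pow_ne_zero 2 hi₀))
  have hnonpos : ∑ k, d k * (L x k) ^ 2 ≤ 0 := by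
    apply Finset.sum_nonpos
    intro k _
    by_cases hk : 0 < d k
    · simp [hx2 k hk]
    · have := mul_nonneg (neg_nonneg.mpr (le_of_not_gt hk)) (sq_nonneg (L x k))
      nlinarith
  rw [h x] at hpos
  linarith

theorem spectral_bridge {m : Type*} [Fintype m] [DecidableEq m]
    {A : Matrix m m ℝ} (hA : A.IsHermitian) (y : m → ℝ) :
    ∑ i, hA.eigenvalues i * y i ^ 2 =
      ((hA.eigenvectorUnitary : Matrix m m ℝ) *ᵥ y) ⬝ᵥ
        (A *ᵥ ((hA.eigenvectorUnitary : Matrix m m ℝ) *ᵥ y)) := by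
  set U : Matrix m m ℝ := (hA.eigenvectorUnitary : Matrix m m ℝ) with hU
  have hdiag : star U * A * U = Matrix.diagonal hA.eigenvalues := by
    have hu1 : star U * U = 1 := Unitary.coe_star_mul_self _
    have h := hA.spectral_theorem
    rw [Unitary.conjStarAlgAut_apply] at h
    conv_lhs => rw [h]
    rw [← hU]
    simp only [mul_assoc, hu1, mul_one]
    rw [← mul_assoc, hu1, one_mul]
    simp [RCLike.ofReal_real_eq_id]
  have hstar : star U = Uᵀ := by
    rw [Matrix.star_eq_conjTranspose]
    ext i j
    simp [Matrix.conjTranspose_apply]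
  calc ∑ i, hA.eigenvalues i * y i ^ 2
      = y ⬝ᵥ (Matrix.diagonal hA.eigenvalues *ᵥ y) := by
        simp only [dotProduct, mulVec_diagonal]
        exact Finset.sum_congr rfl fun i _ => by ring
    _ = y ⬝ᵥ ((star U * A * U) *ᵥ y) := by rw [hdiag]
    _ = y ⬝ᵥ (Uᵀ *ᵥ (A *ᵥ (U *ᵥ y))) := by
        rw [← hstar, ← Matrix.mulVec_mulVec, ← Matrix.mulVec_mulVec]
    _ = (U *ᵥ y) ⬝ᵥ (A *ᵥ (U *ᵥ y)) := by
        rw [Matrix.mulVec_transpose, dotProduct_comm, Matrix.dotProduct_mulVec,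
          ← Matrix.dotProduct_mulVec, dotProduct_comm, ← Matrix.dotProduct_mulVec]

open Finset Matrix

section Cyc

variable (n : ℕ) [NeZero n] (A : Matrix (ZMod n) (ZMod n) ℝ)

/-- Edge weight of the cycle: `a t = A t (t+1)`. -/
noncomputable def cycA (t : ℕ) : ℝ := A (t : ZMod n) ((t + 1 : ℕ) : ZMod n)

/-- The recursively defined closing-edge weights. -/
noncomputable def cycC : ℕ → ℝ
  | 0 => cycA n A (n - 1)
  | k + 1 => -(cycA n A (2 * k + 1) * cycC k) / cycA n A (2 * k)

noncomputable def cycU (k : ℕ) (x : ZMod n → ℝ) : ℝ :=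
  x ((2 * k : ℕ) : ZMod n) + (cycA n A (2 * k + 1) / cycA n A (2 * k)) * x ((2 * k + 2 : ℕ) : ZMod n)

noncomputable def cycV (k : ℕ) (x : ZMod n → ℝ) : ℝ :=
  x ((2 * k + 1 : ℕ) : ZMod n) + (cycC n A k / cycA n A (2 * k)) * x ((n - 1 : ℕ) : ZMod n)

noncomputable def cycZ (x : ZMod n → ℝ) (t : ℕ) : ℝ :=
  if t = n - 1 then x ((n - 1 : ℕ) : ZMod n)
  else if Even t then cycU n A (t / 2) x + cycV n A (t / 2) x
  else cycU n A (t / 2) x - cycV n A (t / 2) x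

noncomputable def cycD (t : ℕ) : ℝ :=
  if t = n - 1 then 2 * cycC n A ((n - 1) / 2)
  else if Even t then cycA n A t / 2
  else -(cycA n A (t - 1)) / 2

noncomputable def cycL : (ZMod n → ℝ) →ₗ[ℝ] (ZMod n → ℝ) where
  toFun x w := cycZ n A x w.val
  map_add' x y := by
    funext w
    simp only [cycZ, cycU, cycV, Pi.add_apply]
    split_ifs <;> ring
  map_smul' r x := by
    funext w
    simp only [cycZ, cycU, cycV, Pi.smul_apply, smul_eq_mul, RingHom.id_apply]
    split_ifs <;> ring

end Cyc

/-- Reindex a sum over `ZMod n` as a sum over `range n`. -/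
theorem zmod_sum_eq {M : Type*} [AddCommMonoid M] (n : ℕ) [NeZero n] (g : ZMod n → M) :
    ∑ w : ZMod n, g w = ∑ t ∈ Finset.range n, g (t : ZMod n) := by
  refine Finset.sum_nbij' (fun w => w.val) (fun t => (t : ZMod n)) ?_ ?_ ?_ ?_ ?_
  · intro w _; exact Finset.mem_range.mpr (ZMod.val_lt w)
  · intro t _; exact Finset.mem_univ _
  · intro w _; exact ZMod.natCast_rightInverse w
  · intro t ht; exact ZMod.val_natCast_of_lt (Finset.mem_range.mp ht)
  · intro w _; rw [ZMod.natCast_rightInverse w]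

theorem sum_range_pair {M : Type*} [AddCommMonoid M] (f : ℕ → M) (K : ℕ) :
    ∑ t ∈ Finset.range (2 * K + 1), f t =
      (∑ j ∈ Finset.range K, (f (2 * j) + f (2 * j + 1))) + f (2 * K) := by
  induction K with
  | zero => simp
  | succ K ih =>
    have e1 : 2 * (K + 1) + 1 = (2 * K + 1) + 1 + 1 := by ring
    rw [e1, Finset.sum_range_succ, Finset.sum_range_succ, ih, Finset.sum_range_succ]
    have e2 : 2 * K + 1 + 1 = 2 * (K + 1) := by ring
    rw [e2]
    abel

section Tel

variable {n : ℕ} [NeZero n] {A : Matrix (ZMod n) (ZMod n) ℝ} {m : ℕ}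

theorem cyc_telescope (hm : n = 2 * m + 3) (ha : ∀ t, 0 < cycA n A t) (x : ZMod n → ℝ) :
    ∀ k, k ≤ m + 1 →
      ∑ t ∈ Finset.range n, 2 * cycA n A t * x (t : ZMod n) * x ((t + 1 : ℕ) : ZMod n) =
        (∑ j ∈ Finset.range k, 2 * cycA n A (2 * j) * cycU n A j x * cycV n A j x) +
          (∑ t ∈ Finset.Ico (2 * k) (n - 1),
            2 * cycA n A t * x (t : ZMod n) * x ((t + 1 : ℕ) : ZMod n)) +
          2 * cycC n A k * x ((2 * k : ℕ) : ZMod n) * x ((n - 1 : ℕ) : ZMod n) := by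
  intro k
  induction k with
  | zero =>
    intro _
    have hn1 : Finset.range n = Finset.range ((n - 1) + 1) := by
      congr 1; omega
    rw [hn1, Finset.sum_range_succ]
    have hcast : ((n - 1 + 1 : ℕ) : ZMod n) = ((0 : ℕ) : ZMod n) := by
      have : n - 1 + 1 = n := by omega
      rw [this]; simp [ZMod.natCast_self]
    rw [hcast]
    rw [Finset.range_eq_Ico]
    simp only [Finset.range_zero, Finset.sum_empty, zero_add, Nat.mul_zero, Nat.cast_zero, Finset.Ico_self]
    have hc0 : cycC n A 0 = cycA n A (n - 1) := rfl
    rw [hc0]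
    ring
  | succ k ih =>
    intro hk1
    have hk : k ≤ m := by omega
    rw [ih (by omega)]
    have h1 : (2 : ℕ) * k < n - 1 := by omega
    have h2 : 2 * k + 1 < n - 1 := by omega
    rw [Finset.sum_eq_sum_Ico_succ_bot h1, Finset.sum_eq_sum_Ico_succ_bot h2]
    have e1 : 2 * k + 1 + 1 = 2 * (k + 1) := by ring
    rw [e1]
    rw [Finset.sum_range_succ]
    have hane : cycA n A (2 * k) ≠ 0 := (ha _).ne'
    have hc : cycC n A (k + 1) = -(cycA n A (2 * k + 1) * cycC n A k) / cycA n A (2 * k) := rfl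
    simp only [cycU, cycV, hc]
    have ecast : ((2 * k + 1 + 1 : ℕ) : ZMod n) = ((2 * (k + 1) : ℕ) : ZMod n) := by
      rw [e1]
    rw [ecast]
    have key : cycA n A (2 * k) * (cycA n A (2 * k))⁻¹ = 1 := mul_inv_cancel₀ hane
    linear_combination (-(2 * cycC n A k * x ((2 * k : ℕ) : ZMod n) * x ((n - 1 : ℕ) : ZMod n)
      + 2 * cycA n A (2 * k + 1) * x ((2 * (k + 1) : ℕ) : ZMod n) * x ((2 * k + 1 : ℕ) : ZMod n))
      - 2 * cycA n A (2 * k + 1) * x ((2 * (k + 1) : ℕ) : ZMod n) * cycC n A k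
        * x ((n - 1 : ℕ) : ZMod n) * (cycA n A (2 * k))⁻¹) * key
  
end Tel

section QF

variable {n : ℕ} [NeZero n] {A : Matrix (ZMod n) (ZMod n) ℝ}

theorem cyc_qform (hn : 3 ≤ n) (hA : A.IsHermitian)
    (hzero : ∀ i j : ZMod n, ¬(j = i + 1 ∨ j = i - 1) → A i j = 0) (x : ZMod n → ℝ) :
    x ⬝ᵥ A *ᵥ x =
      ∑ t ∈ Finset.range n, 2 * cycA n A t * x (t : ZMod n) * x ((t + 1 : ℕ) : ZMod n) := by
  have hsym : ∀ i j : ZMod n, A i j = A j i := by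
    intro i j
    conv_lhs => rw [← hA]
    simp [Matrix.conjTranspose_apply]
  have hne : ∀ w : ZMod n, w + 1 ≠ w - 1 := by
    intro w h
    have h2 : ((2 : ℕ) : ZMod n) = 0 := by
      have : (w + 1) - (w - 1) = ((2 : ℕ) : ZMod n) := by push_cast; ring
      rw [← this, h, sub_self]
    rw [ZMod.natCast_eq_zero_iff] at h2
    have := Nat.le_of_dvd (by norm_num) h2
    omega
  have hinner : ∀ w : ZMod n, (A *ᵥ x) w = A w (w + 1) * x (w + 1) + A w (w - 1) * x (w - 1) := by
    intro w
    show ∑ j, A w j * x j = _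
    rw [← Finset.sum_pair (f := fun j => A w j * x j) (hne w)]
    refine (Finset.sum_subset (Finset.subset_univ _) ?_).symm
    intro j _ hj
    simp only [Finset.mem_insert, Finset.mem_singleton] at hj
    push_neg at hj
    rw [hzero w j (by tauto), zero_mul]
  calc x ⬝ᵥ A *ᵥ x
      = ∑ w : ZMod n, (x w * A w (w + 1) * x (w + 1) + x w * A w (w - 1) * x (w - 1)) := by
        refine Finset.sum_congr rfl fun w _ => ?_
        rw [hinner w]; ring
    _ = (∑ w : ZMod n, x w * A w (w + 1) * x (w + 1))
          + ∑ w : ZMod n, x w * A w (w - 1) * x (w - 1) := Finset.sum_add_distrib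
    _ = ∑ w : ZMod n, 2 * A w (w + 1) * x w * x (w + 1) := by
        have : ∑ w : ZMod n, x w * A w (w - 1) * x (w - 1)
            = ∑ v : ZMod n, x (v + 1) * A (v + 1) v * x v := by
          refine (Fintype.sum_equiv (Equiv.addRight (1 : ZMod n))
            (fun v => x (v + 1) * A (v + 1) v * x v)
            (fun w => x w * A w (w - 1) * x (w - 1)) fun v => ?_).symm
          simp
        rw [this, ← Finset.sum_add_distrib]
        refine Finset.sum_congr rfl fun w _ => ?_
        rw [hsym (w + 1) w]; ring
    _ = _ := by
        rw [zmod_sum_eq n (fun w => 2 * A w (w + 1) * x w * x (w + 1))]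
        refine Finset.sum_congr rfl fun t _ => ?_
        simp only [cycA]
        push_cast
        ring

end QF

section Main

variable {n : ℕ} [NeZero n] {A : Matrix (ZMod n) (ZMod n) ℝ} {m : ℕ}

theorem cyc_main_identity (hm : n = 2 * m + 3) (ha : ∀ t, 0 < cycA n A t)
    (hA : A.IsHermitian)
    (hzero : ∀ i j : ZMod n, ¬(j = i + 1 ∨ j = i - 1) → A i j = 0) (x : ZMod n → ℝ) :
    x ⬝ᵥ A *ᵥ x = ∑ w : ZMod n, cycD n A w.val * (cycL n A x w) ^ 2 := by
  have hrange : Finset.range n = Finset.range (2 * (m + 1) + 1) := by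
    have hn' : n = 2 * (m + 1) + 1 := by omega
    rw [hn']
  rw [zmod_sum_eq n (fun w => cycD n A w.val * (cycL n A x w) ^ 2)]
  have hterm : ∀ t ∈ Finset.range n,
      cycD n A ((t : ZMod n)).val * (cycL n A x ((t : ZMod n))) ^ 2
        = cycD n A t * (cycZ n A x t) ^ 2 := by
    intro t ht
    have hv : ((t : ZMod n)).val = t := ZMod.val_natCast_of_lt (Finset.mem_range.mp ht)
    show cycD n A ((t : ZMod n)).val * (cycZ n A x ((t : ZMod n)).val) ^ 2 = _
    rw [hv]
  rw [Finset.sum_congr rfl hterm, hrange, sum_range_pair]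
  have hpair : ∀ j ∈ Finset.range (m + 1),
      cycD n A (2 * j) * cycZ n A x (2 * j) ^ 2 + cycD n A (2 * j + 1) * cycZ n A x (2 * j + 1) ^ 2
        = 2 * cycA n A (2 * j) * cycU n A j x * cycV n A j x := by
    intro j hj
    have hj1 : j < m + 1 := Finset.mem_range.mp hj
    have hde : cycD n A (2 * j) = cycA n A (2 * j) / 2 := by
      simp only [cycD]
      rw [if_neg (by omega), if_pos ⟨j, by ring⟩]
    have hdo : cycD n A (2 * j + 1) = -(cycA n A (2 * j)) / 2 := by
      simp only [cycD]
      rw [if_neg (by omega), if_neg (by rintro ⟨r, hr⟩; omega)]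
      have h21 : 2 * j + 1 - 1 = 2 * j := by omega
      rw [h21]
    have hze : cycZ n A x (2 * j) = cycU n A j x + cycV n A j x := by
      simp only [cycZ]
      rw [if_neg (by omega), if_pos ⟨j, by ring⟩]
      have h2 : 2 * j / 2 = j := by omega
      rw [h2]
    have hzo : cycZ n A x (2 * j + 1) = cycU n A j x - cycV n A j x := by
      simp only [cycZ]
      rw [if_neg (by omega), if_neg (by rintro ⟨r, hr⟩; omega)]
      have h2 : (2 * j + 1) / 2 = j := by omega
      rw [h2]
    rw [hde, hdo, hze, hzo]
    ring
  rw [Finset.sum_congr rfl hpair]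
  have htop : cycD n A (2 * (m + 1)) * cycZ n A x (2 * (m + 1)) ^ 2
      = 2 * cycC n A (m + 1) * x ((2 * (m + 1) : ℕ) : ZMod n) * x ((n - 1 : ℕ) : ZMod n) := by
    have h1 : 2 * (m + 1) = n - 1 := by omega
    have hd : cycD n A (2 * (m + 1)) = 2 * cycC n A (m + 1) := by
      simp only [cycD]
      rw [if_pos h1]
      have : (n - 1) / 2 = m + 1 := by omega
      rw [this]
    have hzz : cycZ n A x (2 * (m + 1)) = x ((n - 1 : ℕ) : ZMod n) := by
      simp only [cycZ]
      rw [if_pos h1]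
    rw [hd, hzz, h1]
    ring
  rw [htop]
  have := cyc_telescope hm ha x (m + 1) (le_refl _)
  rw [cyc_qform (by omega) hA hzero x, this]
  have hico : Finset.Ico (2 * (m + 1)) (n - 1) = ∅ := by
    apply Finset.Ico_eq_empty
    omega
  rw [hico]
  simp

theorem cycL_injective (hm : n = 2 * m + 3) (ha : ∀ t, 0 < cycA n A t) :
    Function.Injective (cycL n A) := by
  rw [injective_iff_map_eq_zero]
  intro x hx0
  have hz : ∀ t, t < n → cycZ n A x t = 0 := by
    intro t ht
    have := congrFun hx0 ((t : ℕ) : ZMod n)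
    have hv : ((t : ZMod n)).val = t := ZMod.val_natCast_of_lt ht
    simpa [cycL, hv] using this
  have hlast : x ((n - 1 : ℕ) : ZMod n) = 0 := by
    have := hz (n - 1) (by omega)
    simpa [cycZ] using this
  have huv : ∀ j, j ≤ m → cycU n A j x = 0 ∧ cycV n A j x = 0 := by
    intro j hj
    have h1 := hz (2 * j) (by omega)
    have h2 := hz (2 * j + 1) (by omega)
    have hze : cycZ n A x (2 * j) = cycU n A j x + cycV n A j x := by
      simp only [cycZ]
      rw [if_neg (by omega), if_pos ⟨j, by ring⟩]
      have : 2 * j / 2 = j := by omega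
      rw [this]
    have hzo : cycZ n A x (2 * j + 1) = cycU n A j x - cycV n A j x := by
      simp only [cycZ]
      rw [if_neg (by omega), if_neg (by rintro ⟨r, hr⟩; omega)]
      have : (2 * j + 1) / 2 = j := by omega
      rw [this]
    rw [hze] at h1
    rw [hzo] at h2
    constructor <;> linarith
  have hoddz : ∀ j, j ≤ m → x ((2 * j + 1 : ℕ) : ZMod n) = 0 := by
    intro j hj
    have := (huv j hj).2
    simp only [cycV, hlast, mul_zero, add_zero] at this
    exact this
  have hevenz : ∀ i, x ((2 * (m + 1) - 2 * i : ℕ) : ZMod n) = 0 := by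
    intro i
    induction i with
    | zero =>
      have h1 : 2 * (m + 1) - 2 * 0 = n - 1 := by omega
      rw [h1]; exact hlast
    | succ i ih =>
      by_cases hi : i ≤ m
      · have hk : 2 * (m + 1) - 2 * (i + 1) = 2 * (m - i) := by omega
        rw [hk]
        have hu := (huv (m - i) (by omega)).1
        simp only [cycU] at hu
        have h22 : ((2 * (m - i) + 2 : ℕ) : ZMod n) = ((2 * (m + 1) - 2 * i : ℕ) : ZMod n) := by
          congr 1; omega
        rw [h22, ih, mul_zero, add_zero] at hu
        exact hu
      · have h1 : 2 * (m + 1) - 2 * (i + 1) = 2 * (m + 1) - 2 * i := by omega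
        rw [h1]; exact ih
  funext w
  have hw : ((w.val : ℕ) : ZMod n) = w := ZMod.natCast_rightInverse w
  have hwlt : w.val < n := ZMod.val_lt w
  rcases Nat.even_or_odd w.val with ⟨k, hk⟩ | ⟨k, hk⟩
  · have hkm : k ≤ m + 1 := by omega
    have := hevenz (m + 1 - k)
    have h2 : 2 * (m + 1) - 2 * (m + 1 - k) = w.val := by omega
    rw [h2, hw] at this
    exact this
  · have hkm : k ≤ m := by omega
    have := hoddz k hkm
    have h2 : 2 * k + 1 = w.val := by omega
    rw [h2, hw] at this
    exact this

theorem cycC_sign (hm : n = 2 * m + 3) (ha : ∀ t, 0 < cycA n A t) :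
    ∀ k, (Even k → 0 < cycC n A k) ∧ (¬ Even k → cycC n A k < 0) := by
  intro k
  induction k with
  | zero => exact ⟨fun _ => ha (n - 1), fun h => absurd Even.zero h⟩
  | succ k ih =>
    have hc : cycC n A (k + 1) = -(cycA n A (2 * k + 1) * cycC n A k) / cycA n A (2 * k) := rfl
    constructor
    · intro he
      have hk : ¬ Even k := by simpa [Nat.even_add_one] using he
      have := ih.2 hk
      rw [hc]
      apply div_pos ?_ (ha (2 * k))
      nlinarith [ha (2 * k + 1)]
    · intro he
      have hk : Even k := by simpa [Nat.even_add_one] using he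
      have := ih.1 hk
      rw [hc]
      apply div_neg_of_neg_of_pos ?_ (ha (2 * k))
      nlinarith [ha (2 * k + 1)]

end Main

section Count

variable {n : ℕ} [NeZero n] {A : Matrix (ZMod n) (ZMod n) ℝ} {m : ℕ}

theorem cycD_card (hm : n = 2 * m + 3) (ha : ∀ t, 0 < cycA n A t) (P : ℝ → Prop)
    [DecidablePred P]
    (hP : ∀ c : ℝ, 0 < c →
      (if P (c / 2) then (1 : ℕ) else 0) + (if P (-c / 2) then 1 else 0) = 1) :
    Fintype.card {w : ZMod n // P (cycD n A w.val)} =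
      (m + 1) + (if P (2 * cycC n A (m + 1)) then 1 else 0) := by
  classical
  rw [Fintype.card_subtype, Finset.card_filter]
  rw [zmod_sum_eq n (fun w => if P (cycD n A w.val) then 1 else 0)]
  have hterm : ∀ t ∈ Finset.range n,
      (if P (cycD n A ((t : ZMod n)).val) then 1 else 0)
        = (if P (cycD n A t) then 1 else 0) := by
    intro t ht
    rw [ZMod.val_natCast_of_lt (Finset.mem_range.mp ht)]
  rw [Finset.sum_congr rfl hterm]
  have hrange : Finset.range n = Finset.range (2 * (m + 1) + 1) := by
    have hn' : n = 2 * (m + 1) + 1 := by omega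
    rw [hn']
  rw [hrange, sum_range_pair]
  have hpair : ∀ j ∈ Finset.range (m + 1),
      ((if P (cycD n A (2 * j)) then 1 else 0) + (if P (cycD n A (2 * j + 1)) then 1 else 0))
        = 1 := by
    intro j hj
    have hj1 : j < m + 1 := Finset.mem_range.mp hj
    have hde : cycD n A (2 * j) = cycA n A (2 * j) / 2 := by
      simp only [cycD]
      rw [if_neg (by omega), if_pos ⟨j, by ring⟩]
    have hdo : cycD n A (2 * j + 1) = -(cycA n A (2 * j)) / 2 := by
      simp only [cycD]
      rw [if_neg (by omega), if_neg (by rintro ⟨r, hr⟩; omega)]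
      have h21 : 2 * j + 1 - 1 = 2 * j := by omega
      rw [h21]
    rw [hde, hdo]
    exact hP _ (ha _)
  rw [Finset.sum_congr rfl hpair, Finset.sum_const, smul_eq_mul, mul_one, Finset.card_range]
  have hd : cycD n A (2 * (m + 1)) = 2 * cycC n A (m + 1) := by
    simp only [cycD]
    rw [if_pos (by omega : 2 * (m + 1) = n - 1)]
    have : (n - 1) / 2 = m + 1 := by omega
    rw [this]
  rw [hd]

end Count


/-- For odd `n ≥ 3`, every real symmetric `n × n` matrix whose support is exactly the
adjacency pattern of the `n`-cycle has signature `((n+1)/2, (n-1)/2)` if `n ≡ 1 (mod 4)`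
and `((n-1)/2, (n+1)/2)` if `n ≡ 3 (mod 4)`. -/
theorem cycle_pattern_signature (n : ℕ) [NeZero n] (hn : 3 ≤ n) (hodd : Odd n)
    (A : Matrix (ZMod n) (ZMod n) ℝ) (hA : A.IsHermitian)
    (hpos : ∀ i j : ZMod n, (j = i + 1 ∨ j = i - 1) → 0 < A i j)
    (hzero : ∀ i j : ZMod n, ¬(j = i + 1 ∨ j = i - 1) → A i j = 0) :
    (n % 4 = 1 →
      Fintype.card {i : ZMod n // 0 < hA.eigenvalues i} = (n + 1) / 2 ∧
      Fintype.card {i : ZMod n // hA.eigenvalues i < 0} = (n - 1) / 2) ∧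
    (n % 4 = 3 →
      Fintype.card {i : ZMod n // 0 < hA.eigenvalues i} = (n - 1) / 2 ∧
      Fintype.card {i : ZMod n // hA.eigenvalues i < 0} = (n + 1) / 2) := by
  classical
  obtain ⟨t, ht⟩ := hodd
  have hm : n = 2 * (t - 1) + 3 := by omega
  set m : ℕ := t - 1 with hmdef
  have ha : ∀ s : ℕ, 0 < cycA n A s := by
    intro s
    have hcast : ((s + 1 : ℕ) : ZMod n) = (s : ZMod n) + 1 := by push_cast; ring
    show 0 < A (s : ZMod n) ((s + 1 : ℕ) : ZMod n)
    rw [hcast]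
    exact hpos _ _ (Or.inl rfl)
  set U : Matrix (ZMod n) (ZMod n) ℝ := (hA.eigenvectorUnitary : Matrix (ZMod n) (ZMod n) ℝ)
    with hUdef
  have hUmem := hA.eigenvectorUnitary.2
  have hUstar : U * star U = 1 := (Unitary.mem_iff.mp hUmem).2
  have hinj : Function.Injective (cycL n A) := cycL_injective hm ha
  have hbij : Function.Bijective (cycL n A) :=
    ⟨hinj, LinearMap.injective_iff_surjective.mp hinj⟩
  set EL : (ZMod n → ℝ) ≃ₗ[ℝ] (ZMod n → ℝ) := LinearEquiv.ofBijective _ hbij with hELdef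
  set M₁ : (ZMod n → ℝ) →ₗ[ℝ] (ZMod n → ℝ) := (cycL n A) ∘ₗ (Matrix.mulVecLin U) with hM₁
  set M₂ : (ZMod n → ℝ) →ₗ[ℝ] (ZMod n → ℝ) :=
    (Matrix.mulVecLin (star U)) ∘ₗ (EL.symm : (ZMod n → ℝ) →ₗ[ℝ] (ZMod n → ℝ)) with hM₂
  have h₁ : ∀ y : ZMod n → ℝ, ∑ i, hA.eigenvalues i * y i ^ 2
      = ∑ k, cycD n A k.val * (M₁ y k) ^ 2 := by
    intro y
    rw [spectral_bridge hA y, cyc_main_identity hm ha hA hzero (U *ᵥ y)]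
    rfl
  have h₂ : ∀ w : ZMod n → ℝ, ∑ k, cycD n A k.val * w k ^ 2
      = ∑ i, hA.eigenvalues i * (M₂ w i) ^ 2 := by
    intro w
    have hx : cycL n A (EL.symm w) = w := EL.apply_symm_apply w
    have hM₂w : M₂ w = star U *ᵥ (EL.symm w) := rfl
    rw [hM₂w, spectral_bridge hA (star U *ᵥ EL.symm w), ← hUdef, Matrix.mulVec_mulVec, hUstar,
      Matrix.one_mulVec, cyc_main_identity hm ha hA hzero, hx]
  have h₁n : ∀ y : ZMod n → ℝ, ∑ i, (-hA.eigenvalues i) * y i ^ 2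
      = ∑ k, (-(cycD n A k.val)) * (M₁ y k) ^ 2 := by
    intro y
    simp only [neg_mul, Finset.sum_neg_distrib]
    rw [h₁ y]
  have h₂n : ∀ w : ZMod n → ℝ, ∑ k, (-(cycD n A k.val)) * w k ^ 2
      = ∑ i, (-hA.eigenvalues i) * (M₂ w i) ^ 2 := by
    intro w
    simp only [neg_mul, Finset.sum_neg_distrib]
    rw [h₂ w]
  have hp : Fintype.card {i : ZMod n // 0 < hA.eigenvalues i}
      = Fintype.card {w : ZMod n // 0 < cycD n A w.val} :=
    le_antisymm (sylvester_card_le _ _ M₁ h₁) (sylvester_card_le _ _ M₂ h₂)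
  have hq : Fintype.card {i : ZMod n // hA.eigenvalues i < 0}
      = Fintype.card {w : ZMod n // cycD n A w.val < 0} := by
    have e1 : Fintype.card {i : ZMod n // hA.eigenvalues i < 0}
        = Fintype.card {i : ZMod n // 0 < -hA.eigenvalues i} :=
      Fintype.card_congr (Equiv.subtypeEquivRight fun i => neg_pos.symm)
    have e2 : Fintype.card {w : ZMod n // cycD n A w.val < 0}
        = Fintype.card {w : ZMod n // 0 < -(cycD n A w.val)} :=
      Fintype.card_congr (Equiv.subtypeEquivRight fun w => neg_pos.symm)
    rw [e1, e2]
    exact le_antisymm (sylvester_card_le _ _ M₁ h₁n) (sylvester_card_le _ _ M₂ h₂n)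
  have hcardp : Fintype.card {w : ZMod n // 0 < cycD n A w.val}
      = (m + 1) + (if 0 < 2 * cycC n A (m + 1) then 1 else 0) := by
    refine cycD_card hm ha (fun r => 0 < r) ?_
    intro c hc
    rw [if_pos (by linarith), if_neg (by intro h; nlinarith)]
  have hcardn : Fintype.card {w : ZMod n // cycD n A w.val < 0}
      = (m + 1) + (if 2 * cycC n A (m + 1) < 0 then 1 else 0) := by
    refine cycD_card hm ha (fun r => r < 0) ?_
    intro c hc
    rw [if_neg (by intro h; nlinarith), if_pos (by linarith)]
  refine ⟨fun h4 => ?_, fun h4 => ?_⟩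
  · have hmodd : ¬ Even m := by rw [Nat.even_iff]; omega
    have hcpos : 0 < cycC n A (m + 1) :=
      (cycC_sign hm ha (m + 1)).1 (Nat.even_add_one.mpr hmodd)
    constructor
    · rw [hp, hcardp, if_pos (by linarith)]
      omega
    · rw [hq, hcardn, if_neg (by intro h; linarith)]
      omega
  · have hmeven : Even m := by rw [Nat.even_iff]; omega
    have hcneg : cycC n A (m + 1) < 0 :=
      (cycC_sign hm ha (m + 1)).2 (by simpa [Nat.even_add_one] using hmeven)
    constructor
    · rw [hp, hcardp, if_neg (by intro h; linarith)]
      omega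
    · rw [hq, hcardn, if_pos (by linarith)]
      omega
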